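/- Let K be a field equipped with a (additive, ℤ-valued) valuation v, let V = ⊕_{s=0}^{d} V_s be a finite-dimensional K-vector space, and let Φ : V → V be a K-linear bijection and N : V → V K-linear with N∘Φ = c·(Φ∘N) for a scalar c ∈ K with v(c) = w > 0. Suppose there exist m ≥ 1 and a scalar α ∈ K× such that Φ^m restricted to V_s is multiplication by α·c^{m·s} for each s. Then N(V_s) ⊆ V_{s−1} for all s ≥ 1 and N(V_0) = 0. -/

import Mathlib

theorem stmt3 {K V : Type*} [Field K] [AddCommGroup V] [Module K V]
    (d : ℕ) (Vs : Fin (d + 1) → Submodule K V)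
    (hVs : DirectSum.IsInternal Vs)
    (Φ N : V →ₗ[K] V) (hΦ : Function.Bijective Φ)
    (c : K) (hrel : N ∘ₗ Φ = c • (Φ ∘ₗ N))
    (v : AddValuation K (WithTop ℤ)) (w : ℤ)
    (hvc : v c = (w : WithTop ℤ)) (hw : 0 < w)
    (m : ℕ) (hm : 1 ≤ m) (α : K) (hα : α ≠ 0)
    (hΦm : ∀ s : Fin (d + 1), ∀ x ∈ Vs s,
      (Φ ^ m) x = (α * c ^ (m * (s : ℕ))) • x) :
    (∀ s t : Fin (d + 1), (s : ℕ) = (t : ℕ) + 1 →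
      ∀ x ∈ Vs s, N x ∈ Vs t) ∧
    (∀ x ∈ Vs ⟨0, Nat.succ_pos d⟩, N x = 0) := by
  classical
  letI := hVs.chooseDecomposition
  -- powers of c are distinct
  have hpow : ∀ i j : ℕ, c ^ i = c ^ j → i = j := by
    intro i j h
    have := congrArg v h
    rw [v.map_pow, v.map_pow, hvc] at this
    have hi : (i : ℤ) * w = (j : ℤ) * w := by
      rw [← WithTop.coe_eq_coe (α := ℤ)]
      push_cast
      rw [← WithTop.coe_nsmul, ← WithTop.coe_nsmul, WithTop.coe_eq_coe, nsmul_eq_mul, nsmul_eq_mul] at this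
      exact_mod_cast this
    exact_mod_cast mul_right_cancel₀ hw.ne' hi
  -- twisted commutation for powers of Φ
  have hrel' : ∀ x : V, N (Φ x) = c • Φ (N x) := by
    intro x
    have := LinearMap.ext_iff.mp hrel x
    simpa using this
  have hrelm : ∀ k : ℕ, ∀ x : V, N ((Φ ^ k) x) = c ^ k • (Φ ^ k) (N x) := by
    intro k
    induction k with
    | zero => intro x; simp
    | succ k ih =>
      intro x
      have h1 : (Φ ^ (k + 1)) x = (Φ ^ k) (Φ x) := by rw [pow_succ]; rfl
      have h2 : (Φ ^ (k + 1)) (N x) = (Φ ^ k) (Φ (N x)) := by rw [pow_succ]; rfl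
      rw [h1, ih (Φ x), hrel' x, map_smul, h2, smul_smul, pow_succ]
  -- the components of an element
  set Y : V → Fin (d + 1) → V := fun y t => (DirectSum.decompose Vs y t : V) with hY
  have hYmem : ∀ (y : V) (t : Fin (d + 1)), Y y t ∈ Vs t :=
    fun y t => (DirectSum.decompose Vs y t).2
  have hysum : ∀ y : V, y = ∑ t : Fin (d + 1), Y y t := by
    intro y
    refine (DirectSum.sum_support_decompose Vs y).symm.trans
      (Finset.sum_subset (Finset.subset_univ _) ?_)
    intro t _ h
    simp only [hY]
    rw [DFinsupp.notMem_support_iff.mp h]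
    rfl
  -- component of a weighted sum of components
  have comp : ∀ (y : V) (f : Fin (d + 1) → K) (t : Fin (d + 1)),
      (DirectSum.decompose Vs (∑ t', f t' • Y y t') t : V) = f t • Y y t := by
    intro y f t
    rw [DirectSum.decompose_sum, DFinsupp.finset_sum_apply, AddSubmonoidClass.coe_finset_sum]
    rw [Finset.sum_eq_single_of_mem t (Finset.mem_univ t) (fun t' _ ht' =>
      DirectSum.decompose_of_mem_ne Vs (Submodule.smul_mem _ _ (hYmem y t')) ht')]
    exact DirectSum.decompose_of_mem_same Vs (Submodule.smul_mem _ _ (hYmem y t))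
  -- key: killing components
  have key : ∀ (y : V) (b : K), c ^ m • (Φ ^ m) y = b • y →
      ∀ t : Fin (d + 1), α * c ^ (m * (t : ℕ) + m) ≠ b → Y y t = 0 := by
    intro y b hE t ht
    have hE2 : ∑ t' : Fin (d + 1), (α * c ^ (m * (t' : ℕ) + m)) • Y y t' = ∑ t' : Fin (d + 1), b • Y y t' := by
      calc ∑ t' : Fin (d + 1), (α * c ^ (m * (t' : ℕ) + m)) • Y y t'
          = c ^ m • (Φ ^ m) y := by
            conv_rhs => rw [hysum y]
            rw [map_sum, Finset.smul_sum]
            refine Finset.sum_congr rfl fun t' _ => ?_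
            rw [hΦm t' _ (hYmem y t'), smul_smul, pow_add]
            ring_nf
        _ = b • y := hE
        _ = ∑ t' : Fin (d + 1), b • Y y t' := by
            conv_lhs => rw [hysum y]
            rw [Finset.smul_sum]
    have := congrArg (fun z => (DirectSum.decompose Vs z t : V)) hE2
    simp only [comp y] at this
    have h0 : (α * c ^ (m * (t : ℕ) + m) - b) • Y y t = 0 := by
      rw [sub_smul, this, sub_self]
    rcases smul_eq_zero.mp h0 with h | h
    · exact absurd (sub_eq_zero.mp h) ht
    · exact h
  constructor
  · intro s t hst x hx
    have hE : c ^ m • (Φ ^ m) (N x) = (α * c ^ (m * (s : ℕ))) • N x := by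
      have := hrelm m x
      rw [hΦm s x hx, map_smul] at this
      exact this.symm
    have hz : ∀ t' : Fin (d + 1), t' ≠ t → Y (N x) t' = 0 := by
      intro t' ht'
      refine key (N x) _ hE t' ?_
      intro h
      have h2 : c ^ (m * (t' : ℕ) + m) = c ^ (m * (s : ℕ)) := mul_left_cancel₀ hα h
      have h3 := hpow _ _ h2
      apply ht'
      have : m * ((t' : ℕ) + 1) = m * ((t : ℕ) + 1) := by
        rw [Nat.mul_add, Nat.mul_one, h3, hst]
      have h4 : (t' : ℕ) + 1 = (t : ℕ) + 1 :=
        Nat.eq_of_mul_eq_mul_left (Nat.lt_of_lt_of_le Nat.zero_lt_one hm) this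
      exact Fin.ext (Nat.succ_injective h4)
    have : N x = Y (N x) t := by
      conv_lhs => rw [hysum (N x)]
      rw [Finset.sum_eq_single_of_mem t (Finset.mem_univ t) (fun t' _ ht' => hz t' ht')]
    rw [this]; exact hYmem (N x) t
  · intro x hx
    have hE : c ^ m • (Φ ^ m) (N x) =
        (α * c ^ (m * ((⟨0, Nat.succ_pos d⟩ : Fin (d + 1)) : ℕ))) • N x := by
      have := hrelm m x
      rw [hΦm _ x hx, map_smul] at this
      exact this.symm
    have hz : ∀ t' : Fin (d + 1), Y (N x) t' = 0 := by
      intro t'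
      refine key (N x) _ hE t' ?_
      intro h
      have h2 := hpow _ _ (mul_left_cancel₀ hα h)
      simp only [Fin.val_mk, Nat.mul_zero] at h2
      omega
    rw [hysum (N x)]
    exact Finset.sum_eq_zero fun t' _ => hz t'
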